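/- arXiv:2007.01601 — 3 statements merged into one kernel-verified Lean document; each statement's English description precedes it below -/
import Mathlib

section
/- Let n ∈ ℕ, let M be an invertible real n×n matrix, A a real n×n matrix, S, L ∈ ℝⁿ, and Δt > 0, and assume 1 + (Δt/2)·Sᵀ M⁻¹ A S ≠ 0. Then there exists a unique vector U ∈ ℝⁿ satisfying (1/Δt)·M U + (1/2)·(Sᵀ U)·(A S) = L, and this solution satisfies Sᵀ U = Δt·(Sᵀ M⁻¹ L)/(1 + (Δt/2)·Sᵀ M⁻¹ A S). -/
open Matrix

/-- Let `M` be an invertible real `n×n` matrix, `A` a real `n×n` matrix, `S, L ∈ ℝⁿ`,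
`Δt > 0`, and assume `1 + (Δt/2)·Sᵀ M⁻¹ A S ≠ 0`. Then there exists a unique vector `U`
with `(1/Δt)·M U + (1/2)·(Sᵀ U)·(A S) = L`, and it satisfies
`Sᵀ U = Δt·(Sᵀ M⁻¹ L)/(1 + (Δt/2)·Sᵀ M⁻¹ A S)`. -/
theorem sav_linear_solver (n : ℕ) (M A : Matrix (Fin n) (Fin n) ℝ) (hM : IsUnit M)
    (S L : Fin n → ℝ) (Δt : ℝ) (hΔt : 0 < Δt)
    (hden : 1 + (Δt / 2) * (S ⬝ᵥ (M⁻¹ *ᵥ (A *ᵥ S))) ≠ 0) :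
    (∃! U : Fin n → ℝ,
      (1 / Δt) • (M *ᵥ U) + ((1 / 2) * (S ⬝ᵥ U)) • (A *ᵥ S) = L) ∧
    ∀ U : Fin n → ℝ,
      (1 / Δt) • (M *ᵥ U) + ((1 / 2) * (S ⬝ᵥ U)) • (A *ᵥ S) = L →
      S ⬝ᵥ U = Δt * (S ⬝ᵥ (M⁻¹ *ᵥ L)) / (1 + (Δt / 2) * (S ⬝ᵥ (M⁻¹ *ᵥ (A *ᵥ S)))) := by
  have hdet : IsUnit M.det := (Matrix.isUnit_iff_isUnit_det M).mp hM
  have hMinv : ∀ v : Fin n → ℝ, M *ᵥ (M⁻¹ *ᵥ v) = v := by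
    intro v
    rw [Matrix.mulVec_mulVec, Matrix.mul_nonsing_inv M hdet, Matrix.one_mulVec]
  have hinvM : ∀ v : Fin n → ℝ, M⁻¹ *ᵥ (M *ᵥ v) = v := by
    intro v
    rw [Matrix.mulVec_mulVec, Matrix.nonsing_inv_mul M hdet, Matrix.one_mulVec]
  set q : ℝ := S ⬝ᵥ (M⁻¹ *ᵥ (A *ᵥ S)) with hq
  set p : ℝ := S ⬝ᵥ (M⁻¹ *ᵥ L) with hp
  set σ : ℝ := Δt * p / (1 + (Δt / 2) * q) with hσ
  clear_value σ
  have hΔt0 : Δt ≠ 0 := ne_of_gt hΔt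
  -- from the equation, U is determined
  have key : ∀ U : Fin n → ℝ,
      (1 / Δt) • (M *ᵥ U) + ((1 / 2) * (S ⬝ᵥ U)) • (A *ᵥ S) = L →
      U = Δt • (M⁻¹ *ᵥ (L - ((1 / 2) * (S ⬝ᵥ U)) • (A *ᵥ S))) := by
    intro U hU
    have h1 : (1 / Δt) • (M *ᵥ U) = L - ((1 / 2) * (S ⬝ᵥ U)) • (A *ᵥ S) := by
      rw [← hU]; abel
    have h2 : M *ᵥ U = Δt • (L - ((1 / 2) * (S ⬝ᵥ U)) • (A *ᵥ S)) := by
      rw [← h1, smul_smul]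
      field_simp
      rw [one_smul]
    calc U = M⁻¹ *ᵥ (M *ᵥ U) := (hinvM U).symm
    _ = Δt • (M⁻¹ *ᵥ (L - ((1 / 2) * (S ⬝ᵥ U)) • (A *ᵥ S))) := by
        rw [h2, Matrix.mulVec_smul]
  have keyσ : ∀ U : Fin n → ℝ,
      (1 / Δt) • (M *ᵥ U) + ((1 / 2) * (S ⬝ᵥ U)) • (A *ᵥ S) = L →
      S ⬝ᵥ U = σ := by
    intro U hU
    have h := key U hU
    have h3 : S ⬝ᵥ U = Δt * (p - (1 / 2) * (S ⬝ᵥ U) * q) := by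
      conv_lhs => rw [h]
      rw [dotProduct_smul, Matrix.mulVec_sub, dotProduct_sub,
        Matrix.mulVec_smul, dotProduct_smul, ← hp, ← hq]
      ring_nf
    have : S ⬝ᵥ U * (1 + (Δt / 2) * q) = Δt * p := by
      linear_combination h3
    rw [hσ, eq_div_iff hden, this]
  -- the candidate solution
  set U₀ : Fin n → ℝ := Δt • (M⁻¹ *ᵥ (L - ((1 / 2) * σ) • (A *ᵥ S))) with hU₀
  have hSU₀ : S ⬝ᵥ U₀ = σ := by
    have : S ⬝ᵥ U₀ = Δt * (p - (1 / 2) * σ * q) := by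
      rw [hU₀, dotProduct_smul, Matrix.mulVec_sub, dotProduct_sub,
        Matrix.mulVec_smul, dotProduct_smul, ← hp, ← hq]
      simp only [smul_eq_mul]
    rw [this]
    have hσeq : σ * (1 + (Δt / 2) * q) = Δt * p := by
      rw [hσ, div_mul_cancel₀ _ hden]
    linear_combination -hσeq
  have hU₀eq : (1 / Δt) • (M *ᵥ U₀) + ((1 / 2) * (S ⬝ᵥ U₀)) • (A *ᵥ S) = L := by
    rw [hSU₀, hU₀, Matrix.mulVec_smul, hMinv, smul_smul, one_div_mul_cancel hΔt0, one_smul]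
    abel
  refine ⟨⟨U₀, hU₀eq, ?_⟩, fun U hU => keyσ U hU⟩
  intro U hU
  have h1 := key U hU
  rw [keyσ U hU] at h1
  rw [h1, hU₀]
end

section
/- Let H be a real inner product space, let a : H × H → ℝ be a symmetric bilinear form with a(v,v) ≥ 0 for all v ∈ H, let u⁰, u¹, c⁰, s ∈ H, r⁰ ∈ ℝ, and let Δt, χ, D > 0. Suppose that for all φ ∈ H, ⟨u¹ − u⁰, φ⟩/Δt = χ·a(c⁰, φ) − D·((1/2)·⟨s, u¹ − u⁰⟩ + r⁰)·a(s, φ). Then ⟨s, u¹ − u⁰⟩ = Δt·(χ·a(c⁰, s) − D·r⁰·a(s, s)) / (1 + (D·Δt/2)·a(s, s)), and in particular the denominator is ≥ 1 > 0. -/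
open RealInnerProductSpace

/-- Abstract SAV scalar-recovery identity: if for all `φ ∈ H`,
`⟨u¹ − u⁰, φ⟩/Δt = χ·a(c⁰, φ) − D·((1/2)·⟨s, u¹ − u⁰⟩ + r⁰)·a(s, φ)`,
where `a` is a symmetric positive semidefinite bilinear form, then
`⟨s, u¹ − u⁰⟩ = Δt·(χ·a(c⁰, s) − D·r⁰·a(s, s)) / (1 + (D·Δt/2)·a(s, s))`,
and the denominator is `≥ 1 > 0`. -/
theorem sav_scalar_recovery {H : Type*} [NormedAddCommGroup H] [InnerProductSpace ℝ H]
    (a : H →ₗ[ℝ] H →ₗ[ℝ] ℝ)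
    (hsym : ∀ v w : H, a v w = a w v)
    (hpos : ∀ v : H, 0 ≤ a v v)
    (u₀ u₁ c₀ s : H) (r₀ : ℝ) (Δt χ D : ℝ)
    (hΔt : 0 < Δt) (hχ : 0 < χ) (hD : 0 < D)
    (heq : ∀ φ : H, ⟪u₁ - u₀, φ⟫ / Δt
      = χ * a c₀ φ - D * ((1 / 2) * ⟪s, u₁ - u₀⟫ + r₀) * a s φ) :
    ⟪s, u₁ - u₀⟫
      = Δt * (χ * a c₀ s - D * r₀ * a s s) / (1 + (D * Δt / 2) * a s s) ∧
    (1:ℝ) ≤ 1 + (D * Δt / 2) * a s s := by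
  have hden : (1:ℝ) ≤ 1 + (D * Δt / 2) * a s s := by
    have h1 : (0:ℝ) ≤ (D * Δt / 2) * a s s :=
      mul_nonneg (by positivity) (hpos s)
    linarith
  have hden0 : (1 + (D * Δt / 2) * a s s) ≠ 0 := by linarith
  have h := heq s
  rw [real_inner_comm] at h
  refine ⟨?_, hden⟩
  rw [eq_div_iff hden0]
  field_simp at h
  linarith [h]
end

section
/- Let H be a real inner product space, let a, b : H × H → ℝ be symmetric bilinear forms with a(v,v) ≥ 0 and b(v,v) ≥ 0 for all v ∈ H, and let α > 0, B > 0, χ > 0, Δt > 0. Suppose u⁰, u¹, c⁰, c¹, μ₁, μ₂, s ∈ H and r⁰, r¹ ∈ ℝ satisfy, for all φ ∈ H: (i) ⟨u¹ − u⁰, φ⟩ = −Δt·χ·a(μ₁, φ); (ii) ⟨c¹ − c⁰, φ⟩ = −Δt·⟨μ₂, φ⟩; (iii) ⟨μ₁, φ⟩ = −⟨c⁰, φ⟩ + B·r¹·⟨s, φ⟩; (iv) ⟨μ₂, φ⟩ = b(c¹, φ) + α·⟨c¹, φ⟩ − ⟨u¹, φ⟩; (v) r¹ − r⁰ = (1/2)·⟨s,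 u¹ − u⁰⟩. Define E(u, c, r) = (1/2)·(b(c,c) + α·‖c‖²) + B·r² − ⟨c, u⟩. Then E(u¹, c¹, r¹) − E(u⁰, c⁰, r⁰) ≤ −Δt·(‖μ₂‖² + χ·a(μ₁, μ₁)) ≤ 0; in particular the discrete energy is nonincreasing. -/
open RealInnerProductSpace

/-- Abstract discrete energy decay for the SAV scheme: under the five discrete relations
(i)–(v), the modified discrete energy
`E(u,c,r) = (1/2)·(b(c,c) + α·‖c‖²) + B·r² − ⟨c,u⟩` satisfies
`E(u¹,c¹,r¹) − E(u⁰,c⁰,r⁰) ≤ −Δt·(‖μ₂‖² + χ·a(μ₁,μ₁)) ≤ 0`. -/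
theorem sav_discrete_energy_decay {H : Type*} [NormedAddCommGroup H] [InnerProductSpace ℝ H]
    (a b : H →ₗ[ℝ] H →ₗ[ℝ] ℝ)
    (hasym : ∀ v w : H, a v w = a w v) (hapos : ∀ v : H, 0 ≤ a v v)
    (hbsym : ∀ v w : H, b v w = b w v) (hbpos : ∀ v : H, 0 ≤ b v v)
    (α B χ Δt : ℝ) (hα : 0 < α) (hB : 0 < B) (hχ : 0 < χ) (hΔt : 0 < Δt)
    (u₀ u₁ c₀ c₁ μ₁ μ₂ s : H) (r₀ r₁ : ℝ)
    (h1 : ∀ φ : H, ⟪u₁ - u₀, φ⟫ = -(Δt * χ) * a μ₁ φ)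
    (h2 : ∀ φ : H, ⟪c₁ - c₀, φ⟫ = -Δt * ⟪μ₂, φ⟫)
    (h3 : ∀ φ : H, ⟪μ₁, φ⟫ = -⟪c₀, φ⟫ + B * r₁ * ⟪s, φ⟫)
    (h4 : ∀ φ : H, ⟪μ₂, φ⟫ = b c₁ φ + α * ⟪c₁, φ⟫ - ⟪u₁, φ⟫)
    (h5 : r₁ - r₀ = (1 / 2) * ⟪s, u₁ - u₀⟫) :
    (((1 / 2) * (b c₁ c₁ + α * ‖c₁‖ ^ 2) + B * r₁ ^ 2 - ⟪c₁, u₁⟫) -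
      ((1 / 2) * (b c₀ c₀ + α * ‖c₀‖ ^ 2) + B * r₀ ^ 2 - ⟪c₀, u₀⟫)
        ≤ -Δt * (‖μ₂‖ ^ 2 + χ * a μ₁ μ₁)) ∧
    -Δt * (‖μ₂‖ ^ 2 + χ * a μ₁ μ₁) ≤ 0 := by
  constructor
  · have A1 := h1 μ₁
    have A3 := h3 (u₁ - u₀)
    have A2 := h2 μ₂
    have A4 := h4 (c₁ - c₀)
    have hbnn := hbpos (c₁ - c₀)
    have hann := hapos μ₁
    have hcnn : (0:ℝ) ≤ ⟪c₁ - c₀, c₁ - c₀⟫ := real_inner_self_nonneg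
    have hsu : ⟪s, u₁ - u₀⟫ = 2 * (r₁ - r₀) := by rw [h5]; ring
    have e1 : ⟪μ₂, μ₂⟫ = ‖μ₂‖ ^ 2 := real_inner_self_eq_norm_sq μ₂
    have e2 : ⟪c₁, c₁⟫ = ‖c₁‖ ^ 2 := real_inner_self_eq_norm_sq c₁
    have e3 : ⟪c₀, c₀⟫ = ‖c₀‖ ^ 2 := real_inner_self_eq_norm_sq c₀
    have s1 : ⟪c₀, c₁⟫ = ⟪c₁, c₀⟫ := real_inner_comm _ _
    have s2 : ⟪u₁, c₁⟫ = ⟪c₁, u₁⟫ := real_inner_comm _ _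
    have s3 : ⟪u₁, c₀⟫ = ⟪c₀, u₁⟫ := real_inner_comm _ _
    have s4 : ⟪μ₂, c₁⟫ = ⟪c₁, μ₂⟫ := real_inner_comm _ _
    have s5 : ⟪μ₂, c₀⟫ = ⟪c₀, μ₂⟫ := real_inner_comm _ _
    have s6 : ⟪μ₁, u₁⟫ = ⟪u₁, μ₁⟫ := real_inner_comm _ _
    have s7 : ⟪μ₁, u₀⟫ = ⟪u₀, μ₁⟫ := real_inner_comm _ _
    have sb : b c₀ c₁ = b c₁ c₀ := hbsym _ _
    simp only [inner_sub_left, inner_sub_right, map_sub, LinearMap.sub_apply] at A1 A2 A3 A4 hbnn hcnn hsu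
    rw [e1] at A2
    rw [e2, e3, s1] at hcnn
    rw [s4, s5, e2, s2, s3] at A4
    rw [s6, s7, hsu] at A3
    nlinarith [sq_nonneg (r₁ - r₀), mul_pos hΔt hχ, hB.le, hΔt.le, hα.le,
      mul_nonneg hα.le hcnn, mul_nonneg hB.le (sq_nonneg (r₁ - r₀))]
  · have hann := hapos μ₁
    nlinarith [sq_nonneg ‖μ₂‖, mul_nonneg hχ.le hann, hΔt.le]
end
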